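/- If a square matrix A of order m can be written A = F_{m-1} ⋯ F_1 D G_1 ⋯ G_{m-1}, where D is diagonal with positive diagonal entries, each F_i is unit lower bidiagonal with nonnegative subdiagonal entries, and each G_i is unit upper bidiagonal with nonnegative superdiagonal entries, then A is totally positive (all minors are nonnegative). -/

import Mathlib

open Matrix



/-- Unit lower bidiagonal with nonnegative subdiagonal entries. -/
def IsNonnegUnitLowerBidiagonal {m : ℕ} (M : Matrix (Fin m) (Fin m) ℝ) : Prop :=
  (∀ i, M i i = 1) ∧ (∀ i j : Fin m, (i : ℕ) = (j : ℕ) + 1 → 0 ≤ M i j) ∧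
    ∀ i j : Fin m, (i : ℕ) ≠ (j : ℕ) → (i : ℕ) ≠ (j : ℕ) + 1 → M i j = 0

/-- Unit upper bidiagonal with nonnegative superdiagonal entries. -/
def IsNonnegUnitUpperBidiagonal {m : ℕ} (M : Matrix (Fin m) (Fin m) ℝ) : Prop :=
  (∀ i, M i i = 1) ∧ (∀ i j : Fin m, (j : ℕ) = (i : ℕ) + 1 → 0 ≤ M i j) ∧
    ∀ i j : Fin m, (j : ℕ) ≠ (i : ℕ) → (j : ℕ) ≠ (i : ℕ) + 1 → M i j = 0



def TP {m : ℕ} (B : Matrix (Fin m) (Fin m) ℝ) : Prop :=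
  ∀ (k : ℕ) (r c : Fin k → Fin m), StrictMono r → StrictMono c →
    0 ≤ (B.submatrix r c).det

lemma tp_transpose {m : ℕ} {B : Matrix (Fin m) (Fin m) ℝ} (hB : TP B) : TP Bᵀ := by
  intro k r c hr hc
  have : (Bᵀ.submatrix r c) = (B.submatrix c r)ᵀ := rfl
  rw [this, Matrix.det_transpose]
  exact hB k c r hc hr

lemma tp_elem {m : ℕ} (B : Matrix (Fin m) (Fin m) ℝ) (hB : TP B) (p q : Fin m)
    (hpq : (p : ℕ) = (q : ℕ) + 1) (c : ℝ) (hc : 0 ≤ c) :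
    TP ((1 + c • Matrix.single p q 1) * B) := by
  have hqp : q ≠ p := by intro h; rw [h] at hpq; omega
  intro k r cols hr hcols
  have hEB : ∀ (a b : Fin m), (((1 + c • Matrix.single p q 1) : Matrix (Fin m) (Fin m) ℝ) * B) a b
      = B a b + (if a = p then c * B q b else 0) := by
    intro a b
    by_cases h : a = p
    · subst h; simp [Matrix.add_mul, Matrix.smul_mul]
    · simp [Matrix.add_mul, Matrix.smul_mul, h]
  by_cases hp : ∃ s, r s = p
  · obtain ⟨s, hs⟩ := hp
    have hsub : ((1 + c • Matrix.single p q 1) * B).submatrix r cols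
        = Matrix.updateRow (B.submatrix r cols) s
            (B.submatrix r cols s + c • fun t => B q (cols t)) := by
      ext s' t
      by_cases h : s' = s
      · subst h
        rw [Matrix.submatrix_apply, hEB, Matrix.updateRow_self]
        simp [hs, Matrix.submatrix_apply]
      · have hne : r s' ≠ p := fun hh => h (hr.injective (hh.trans hs.symm))
        rw [Matrix.submatrix_apply, hEB, Matrix.updateRow_ne h]
        simp [hne, Matrix.submatrix_apply]
    rw [hsub, Matrix.det_updateRow_add, Matrix.det_updateRow_smul,
      Matrix.updateRow_eq_self]
    have h2 : Matrix.updateRow (B.submatrix r cols) s (fun t => B q (cols t))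
        = B.submatrix (Function.update r s q) cols := by
      ext s' t
      by_cases h : s' = s
      · subst h; simp
      · simp [Matrix.updateRow_ne h, Function.update_of_ne h]
    rw [h2]
    by_cases hq : ∃ s', r s' = q
    · obtain ⟨s', hs'⟩ := hq
      have hne : s' ≠ s := by
        intro h; rw [h, hs] at hs'; exact hqp hs'.symm
      have hz : (B.submatrix (Function.update r s q) cols).det = 0 := by
        apply Matrix.det_zero_of_row_eq hne
        funext t
        simp [Matrix.submatrix_apply, Function.update_of_ne hne, hs']
      rw [hz]
      simpa using hB k r cols hr hcols
    · push_neg at hq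
      have hmono : StrictMono (Function.update r s q) := by
        intro a b hab
        by_cases ha : a = s
        · have hb : b ≠ s := by
            intro hb; rw [ha, hb] at hab; exact absurd hab (lt_irrefl _)
          rw [ha, Function.update_self, Function.update_of_ne hb]
          have h1 : r a < r b := hr hab
          rw [ha, hs] at h1
          have h2 : (p : ℕ) < ((r b) : ℕ) := Fin.lt_def.mp h1
          exact Fin.lt_def.mpr (by omega)
        · by_cases hb : b = s
          · rw [hb, Function.update_self, Function.update_of_ne ha]
            have h1 : r a < r b := hr hab
            rw [hb, hs] at h1
            have h1' : (r a : ℕ) < (p : ℕ) := Fin.lt_def.mp h1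
            have h2' : (r a : ℕ) ≠ (q : ℕ) := fun hh => hq a (Fin.ext hh)
            exact Fin.lt_def.mpr (by omega)
          · rw [Function.update_of_ne ha, Function.update_of_ne hb]
            exact hr hab
      have h3 := hB k (Function.update r s q) cols hmono hcols
      have h4 := hB k r cols hr hcols
      nlinarith
  · push_neg at hp
    have heq : ((1 + c • Matrix.single p q 1) * B).submatrix r cols
        = B.submatrix r cols := by
      ext s t
      rw [Matrix.submatrix_apply, hEB]
      simp [hp s]
    rw [heq]
    exact hB k r cols hr hcols
lemma tp_diag {m : ℕ} (D : Matrix (Fin m) (Fin m) ℝ)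
    (hDdiag : ∀ i j, i ≠ j → D i j = 0) (hDpos : ∀ i, 0 ≤ D i i) : TP D := by
  intro k r c hr hc
  by_cases h : ∀ s, r s = c s
  · have heq : D.submatrix r c = Matrix.diagonal (fun s => D (r s) (r s)) := by
      ext s t
      by_cases hst : s = t
      · subst hst
        simp [Matrix.submatrix_apply, ← h s]
      · have hne : r s ≠ c t := by
          intro hh
          exact hst (hr.injective (hh.trans (h t).symm))
        rw [Matrix.submatrix_apply, Matrix.diagonal_apply_ne _ hst, hDdiag _ _ hne]
    rw [heq, Matrix.det_diagonal]
    exact Finset.prod_nonneg fun s _ => hDpos _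
  · push_neg at h
    classical
    obtain ⟨s, hs⟩ := h
    set S := Finset.univ.filter (fun s => r s ≠ c s) with hSdef
    have hS : S.Nonempty := ⟨s, by simp [hSdef, hs]⟩
    set s0 := S.min' hS with hs0def
    have hs0 : r s0 ≠ c s0 := by
      have := S.min'_mem hS
      simpa [hSdef] using this
    have hbelow : ∀ t, t < s0 → r t = c t := by
      intro t ht
      by_contra hne
      exact absurd (S.min'_le t (by simp [hSdef, hne])) (not_le.mpr ht)
    rcases lt_or_gt_of_ne hs0 with hlt0 | hgt0
    · have hz : (D.submatrix r c).det = 0 := by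
        apply Matrix.det_eq_zero_of_row_eq_zero s0
        intro t
        rw [Matrix.submatrix_apply]
        apply hDdiag
        rcases lt_trichotomy t s0 with h1 | h1 | h1
        · intro hh
          have h2 : r s0 = r t := hh.trans (hbelow t h1).symm
          exact absurd (hr.injective h2) (ne_of_gt h1)
        · subst h1; exact hs0
        · have h2 : c s0 < c t := hc h1
          exact ne_of_lt (lt_trans hlt0 h2)
      rw [hz]
    · have hz : (D.submatrix r c).det = 0 := by
        apply Matrix.det_eq_zero_of_column_eq_zero s0
        intro t
        rw [Matrix.submatrix_apply]
        apply hDdiag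
        rcases lt_trichotomy t s0 with h1 | h1 | h1
        · intro hh
          have h2 : c t = c s0 := (hbelow t h1).symm.trans hh
          exact absurd (hc.injective h2) (ne_of_lt h1)
        · subst h1; exact hs0
        · have h2 : r s0 < r t := hr h1
          exact ne_of_gt (lt_trans hgt0 h2)
      rw [hz]
def partialLower {m : ℕ} (F : Matrix (Fin m) (Fin m) ℝ) (n : ℕ) :
    Matrix (Fin m) (Fin m) ℝ :=
  Matrix.of fun a b => if n ≤ (a : ℕ) then F a b else if a = b then 1 else 0

lemma elem_mul_apply {m : ℕ} (p q : Fin m) (c : ℝ) (M : Matrix (Fin m) (Fin m) ℝ)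
    (a b : Fin m) :
    (((1 + c • Matrix.single p q 1) : Matrix (Fin m) (Fin m) ℝ) * M) a b
      = M a b + (if a = p then c * M q b else 0) := by
  by_cases h : a = p
  · subst h; simp [Matrix.add_mul, Matrix.smul_mul]
  · simp [Matrix.add_mul, Matrix.smul_mul, h]

lemma tp_lower_mul {m : ℕ} (F B : Matrix (Fin m) (Fin m) ℝ)
    (hF : IsNonnegUnitLowerBidiagonal F) (hB : TP B) : TP (F * B) := by
  obtain ⟨hdiag, hsub, hzero⟩ := hF
  have hFm : partialLower F m = 1 := by
    ext a b
    have h : ¬ m ≤ (a : ℕ) := not_le.mpr a.isLt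
    simp [partialLower, h, Matrix.one_apply]
  have hF0 : partialLower F 0 = F := by
    ext a b; simp [partialLower]
  have step01 : partialLower F 0 = partialLower F 1 := by
    ext a b
    by_cases h : 1 ≤ (a : ℕ)
    · simp [partialLower, h]
    · have ha : (a : ℕ) = 0 := by omega
      by_cases hab : a = b
      · subst hab; simp [partialLower, h, hdiag a]
      · have h1 : (a : ℕ) ≠ (b : ℕ) := fun hh => hab (Fin.ext hh)
        have h2 : (a : ℕ) ≠ (b : ℕ) + 1 := by omega
        simp [partialLower, h, hab, hzero a b h1 h2]
  have hstep : ∀ n, 1 ≤ n → ∀ hn : n < m,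
      partialLower F n
        = ((1 + F ⟨n, hn⟩ ⟨n - 1, by omega⟩ •
            Matrix.single (⟨n, hn⟩ : Fin m) ⟨n - 1, by omega⟩ 1) :
              Matrix (Fin m) (Fin m) ℝ) * partialLower F (n + 1) := by
    intro n h1 hn
    ext a b
    rw [elem_mul_apply]
    by_cases hap : a = (⟨n, hn⟩ : Fin m)
    · rw [if_pos hap]
      have hav : (a : ℕ) = n := by rw [hap]
      have hL : partialLower F n a b = F a b := by
        simp [partialLower, hav]
      have hA : partialLower F (n + 1) a b = if a = b then 1 else 0 := by
        simp [partialLower, hav]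
      have hQ : partialLower F (n + 1) (⟨n - 1, by omega⟩ : Fin m) b
          = if (⟨n - 1, by omega⟩ : Fin m) = b then 1 else 0 := by
        have : ¬ n + 1 ≤ n - 1 := by omega
        simp [partialLower, this]
      rw [hL, hA, hQ]
      by_cases hb : a = b
      · have hqb : (⟨n - 1, by omega⟩ : Fin m) ≠ b := by
          intro hh
          have h1'' := congrArg Fin.val hh
          have h2'' := congrArg Fin.val hb
          simp at h1''
          omega
        rw [if_pos hb, if_neg hqb, ← hb, hdiag a]
        ring
      · by_cases hbq : (⟨n - 1, by omega⟩ : Fin m) = b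
        · rw [if_neg hb, if_pos hbq, hap, ← hbq]
          ring
        · rw [if_neg hb, if_neg hbq]
          have h1' : (a : ℕ) ≠ (b : ℕ) := fun hh => hb (Fin.ext hh)
          have h2' : (a : ℕ) ≠ (b : ℕ) + 1 := by
            intro hh
            apply hbq
            apply Fin.ext
            simp
            omega
          rw [hzero a b h1' h2']
          ring
    · rw [if_neg hap, add_zero]
      have hav : (a : ℕ) ≠ n := fun hh => hap (Fin.ext hh)
      by_cases h : n + 1 ≤ (a : ℕ)
      · have h' : n ≤ (a : ℕ) := by omega
        simp [partialLower, h, h', show ¬ (a : ℕ) ≤ n by omega]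
      · have h' : ¬ n ≤ (a : ℕ) := by omega
        simp [partialLower, h, h', show ¬ n < (a : ℕ) by omega]
  have key : ∀ j, TP (partialLower F (m - j) * B) := by
    intro j
    induction j with
    | zero => simpa [Nat.sub_zero, hFm, Matrix.one_mul] using hB
    | succ j ih =>
      by_cases hj : m ≤ j
      · have h : m - (j + 1) = m - j := by omega
        rw [h]; exact ih
      · push_neg at hj
        have hmj : m - j = (m - (j + 1)) + 1 := by omega
        rw [hmj] at ih
        rcases Nat.eq_zero_or_pos (m - (j + 1)) with h0 | h1
        · rw [h0] at ih ⊢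
          rw [step01]
          exact ih
        · have hn : m - (j + 1) < m := by omega
          rw [hstep (m - (j + 1)) h1 hn, Matrix.mul_assoc]
          exact tp_elem _ ih ⟨m - (j + 1), hn⟩ ⟨m - (j + 1) - 1, by omega⟩
            (by simp; omega) _ (hsub _ _ (by simp; omega))
  have := key m
  rwa [Nat.sub_self, hF0] at this
lemma upper_transpose {m : ℕ} (G : Matrix (Fin m) (Fin m) ℝ)
    (hG : IsNonnegUnitUpperBidiagonal G) : IsNonnegUnitLowerBidiagonal Gᵀ := by
  obtain ⟨h1, h2, h3⟩ := hG
  refine ⟨fun i => h1 i, fun i j h => h2 j i h, fun i j ha hb => h3 j i ha hb⟩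

lemma tp_of_transpose {m : ℕ} {B : Matrix (Fin m) (Fin m) ℝ} (hB : TP Bᵀ) : TP B := by
  have := tp_transpose hB
  rwa [Matrix.transpose_transpose] at this

lemma tp_mul_upper {m : ℕ} (B G : Matrix (Fin m) (Fin m) ℝ)
    (hG : IsNonnegUnitUpperBidiagonal G) (hB : TP B) : TP (B * G) := by
  apply tp_of_transpose
  rw [Matrix.transpose_mul]
  exact tp_lower_mul _ _ (upper_transpose G hG) (tp_transpose hB)

lemma tp_list_upper {m : ℕ} (L : List (Matrix (Fin m) (Fin m) ℝ))
    (hL : ∀ M ∈ L, IsNonnegUnitUpperBidiagonal M) :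
    ∀ B : Matrix (Fin m) (Fin m) ℝ, TP B → TP (B * L.prod) := by
  induction L with
  | nil => intro B hB; simpa using hB
  | cons g L ih =>
    intro B hB
    rw [List.prod_cons, ← Matrix.mul_assoc]
    exact ih (fun M hM => hL M (List.mem_cons_of_mem _ hM)) _
      (tp_mul_upper _ _ (hL g (List.mem_cons_self)) hB)

lemma tp_list_lower {m : ℕ} (L : List (Matrix (Fin m) (Fin m) ℝ))
    (hL : ∀ M ∈ L, IsNonnegUnitLowerBidiagonal M) :
    ∀ B : Matrix (Fin m) (Fin m) ℝ, TP B → TP (L.prod * B) := by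
  induction L with
  | nil => intro B hB; simpa using hB
  | cons f L ih =>
    intro B hB
    rw [List.prod_cons, Matrix.mul_assoc]
    exact tp_lower_mul _ _ (hL f (List.mem_cons_self))
      (ih (fun M hM => hL M (List.mem_cons_of_mem _ hM)) _ hB)

theorem totally_positive_of_bidiagonal_factorization (m : ℕ)
    (A D : Matrix (Fin m) (Fin m) ℝ)
    (F G : Fin (m-1) → Matrix (Fin m) (Fin m) ℝ)
    (hDdiag : ∀ i j, i ≠ j → D i j = 0) (hDpos : ∀ i, 0 < D i i)
    (hF : ∀ i, IsNonnegUnitLowerBidiagonal (F i))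
    (hG : ∀ i, IsNonnegUnitUpperBidiagonal (G i))
    (hfact : A = (List.ofFn F).reverse.prod * D * (List.ofFn G).prod) :
    ∀ (k : ℕ) (r c : Fin k → Fin m), StrictMono r → StrictMono c →
      0 ≤ (A.submatrix r c).det := by
  have hD : TP D := tp_diag D hDdiag fun i => (hDpos i).le
  have hDG : TP (D * (List.ofFn G).prod) := by
    apply tp_list_upper
    · intro M hM
      rw [List.mem_ofFn] at hM
      obtain ⟨i, rfl⟩ := hM
      exact hG i
    · exact hD
  have hA : TP A := by
    rw [hfact, Matrix.mul_assoc]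
    apply tp_list_lower
    · intro M hM
      rw [List.mem_reverse, List.mem_ofFn] at hM
      obtain ⟨i, rfl⟩ := hM
      exact hF i
    · exact hDG
  exact hA
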